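/- Let k ≥ 1 be an integer and define F_k(s) = (1+2k)·(ζ(s) - ∑_{r=1}^{k-1} r^{-s}) - 2·(ζ(s-1) - ∑_{r=1}^{k-1} r^{1-s}), where ζ is the Riemann zeta function. Then: (i) for every s ∈ ℂ with Re(s) > 2, the series ∑_{n=0}^∞ (1-2n)·(n+k)^{-s} converges and equals F_k(s); (ii) F_k(0) = 2/3 - k - k². -/
import Mathlib

open Complex Finset

lemma sum_aux_gauss (m : ℕ) : ∑ r ∈ Finset.range m, ((r : ℂ) + 1) = m * (m + 1) / 2 := by
  induction m with
  | zero => simp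
  | succ n ih => rw [Finset.sum_range_succ, ih]; push_cast; ring

lemma hasSum_zeta_shift (k : ℕ) (hk : 1 ≤ k) {s : ℂ} (hs : 1 < s.re) :
    HasSum (fun n : ℕ => ((n : ℂ) + k) ^ (-s))
      (riemannZeta s - ∑ r ∈ Finset.range (k - 1), ((r : ℂ) + 1) ^ (-s)) := by
  have hsum : Summable (fun n : ℕ => ((n : ℂ) + 1) ^ (-s)) := by
    have h := Complex.summable_one_div_nat_cpow.mpr hs
    have h2 := (summable_nat_add_iff 1).mpr h
    refine h2.congr fun n => ?_
    push_cast
    rw [cpow_neg, one_div]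
  have hz : HasSum (fun n : ℕ => ((n : ℂ) + 1) ^ (-s)) (riemannZeta s) := by
    refine hsum.hasSum_iff.mpr ?_
    rw [zeta_eq_tsum_one_div_nat_add_one_cpow hs]
    exact tsum_congr fun n => by rw [cpow_neg, one_div]
  have key := (hasSum_nat_add_iff (f := fun n : ℕ => ((n : ℂ) + 1) ^ (-s)) (k - 1)).mpr
    (by rwa [sub_add_cancel])
  have hfun : (fun n : ℕ => ((↑(n + (k - 1)) : ℂ) + 1) ^ (-s)) =
      fun n : ℕ => ((n : ℂ) + k) ^ (-s) := by
    funext n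
    congr 1
    push_cast [Nat.cast_sub hk]
    ring
  rwa [hfun] at key

/-- `F_k(s) = (1+2k)·(ζ(s) - ∑_{r=1}^{k-1} r^{-s}) - 2·(ζ(s-1) - ∑_{r=1}^{k-1} r^{1-s})`. -/
noncomputable def Fk (k : ℕ) (s : ℂ) : ℂ :=
  (1 + 2 * (k : ℂ)) * (riemannZeta s - ∑ r ∈ Finset.range (k - 1), ((r : ℂ) + 1) ^ (-s))
    - 2 * (riemannZeta (s - 1) - ∑ r ∈ Finset.range (k - 1), ((r : ℂ) + 1) ^ (1 - s))

/-- For an integer `k ≥ 1`: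
(i) for `Re(s) > 2` the series `∑_{n=0}^∞ (1-2n)·(n+k)^{-s}` converges and equals `F_k(s)`;
(ii) `F_k(0) = 2/3 - k - k²`. -/
theorem stmt_11 (k : ℕ) (hk : 1 ≤ k) :
    (∀ s : ℂ, 2 < s.re →
      HasSum (fun n : ℕ => (1 - 2 * (n : ℂ)) * ((n : ℂ) + (k : ℂ)) ^ (-s)) (Fk k s)) ∧
    Fk k 0 = 2 / 3 - (k : ℂ) - (k : ℂ) ^ 2 := by
  constructor
  · intro s hs
    have hs1 : 1 < s.re := by linarith
    have hs2 : 1 < (s - 1).re := by simp [Complex.sub_re]; linarith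
    have h1 := hasSum_zeta_shift k hk hs1
    have h2 := hasSum_zeta_shift k hk hs2
    have h2' : HasSum (fun n : ℕ => ((n : ℂ) + k) ^ (1 - s))
        (riemannZeta (s - 1) - ∑ r ∈ Finset.range (k - 1), ((r : ℂ) + 1) ^ (1 - s)) := by
      rw [show (1 : ℂ) - s = -(s - 1) by ring]
      exact h2
    have hcomb := (h1.mul_left (1 + 2 * (k : ℂ))).sub (h2'.mul_left 2)
    have hne : ∀ n : ℕ, ((n : ℂ) + (k : ℂ)) ≠ 0 := fun n => by
      have h0 : ((n + k : ℕ) : ℂ) ≠ 0 := Nat.cast_ne_zero.mpr (by omega)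
      push_cast at h0
      exact h0
    have hfun : (fun n : ℕ => (1 - 2 * (n : ℂ)) * ((n : ℂ) + (k : ℂ)) ^ (-s)) =
        fun n : ℕ => (1 + 2 * (k : ℂ)) * ((n : ℂ) + k) ^ (-s)
          - 2 * ((n : ℂ) + k) ^ (1 - s) := by
      funext n
      rw [show (1 : ℂ) - s = 1 + (-s) by ring, cpow_add _ _ (hne n), cpow_one]
      ring
    rw [hfun]
    exact hcomb
  · have hz1 : riemannZeta (-1 : ℂ) = -1 / 12 := by
      have := riemannZeta_neg_nat_eq_bernoulli 1
      norm_num [bernoulli] at this ⊢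
      convert this using 2
    rw [Fk, show (0 : ℂ) - 1 = -1 by ring, riemannZeta_zero, hz1]
    simp only [neg_zero, cpow_zero, sub_zero, cpow_one]
    rw [sum_aux_gauss (k - 1), Finset.sum_const, Finset.card_range, nsmul_eq_mul, mul_one]
    have hK : ((k - 1 : ℕ) : ℂ) = (k : ℂ) - 1 := by push_cast [Nat.cast_sub hk]; ring
    rw [hK]
    ring
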